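/- Let S ∈ ℚ[[X]] be the unique formal power series with constant term 1 satisfying S² = (1-X)(1-5X). Set d_{-1}=1, and define formal power series R_m ∈ ℚ[[X]] for m≥-1 by: R_{-1} = (3(1-X) - S)/(2(1-X)); for n≥0, R_{2n+1} = d_{2n+1} + (1-3X-S)/(2X) (the series 1-3X-S has zero constant term, so the division by 2X is well defined in ℚ[[X]]); and for n≥0, R_{2n} = d_{2n}/(1 - X·R_{2n+1}) (the series 1 - X·R_{2n+1} has constant term 1 and hence is invertible). Then for every m≥-1, R_m·(1 - X·R_{m+1}) = d_m. -/

import Mathlib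

/-- Fibonacci numbers extended to all integer indices:
`fibZ 0 = 0`, `fibZ 1 = 1`, `fibZ m = fibZ (m-1) + fibZ (m-2)` (so `fibZ (-1) = 1`). -/
def fibZ : ℤ → ℤ
  | Int.ofNat n => Nat.fib n
  | Int.negSucc n => (-1) ^ n * Nat.fib (n + 1)

lemma fibZ_natCast (k : ℕ) : fibZ (k : ℤ) = Nat.fib k := rfl

lemma fib_add_four (m : ℕ) : Nat.fib m + Nat.fib (m + 4) = 3 * Nat.fib (m + 2) := by
  have h1 : Nat.fib (m + 2) = Nat.fib m + Nat.fib (m + 1) := Nat.fib_add_two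
  have h2 : Nat.fib (m + 3) = Nat.fib (m + 1) + Nat.fib (m + 2) := Nat.fib_add_two
  have h3 : Nat.fib (m + 4) = Nat.fib (m + 2) + Nat.fib (m + 3) := Nat.fib_add_two
  omega

lemma fibZ_three_term (n : ℕ) :
    fibZ (2 * (n : ℤ) - 1) + fibZ (2 * (n : ℤ) + 3) = 3 * fibZ (2 * (n : ℤ) + 1) := by
  cases n with
  | zero => decide
  | succ j =>
    have e1 : 2 * ((j + 1 : ℕ) : ℤ) - 1 = ((2 * j + 1 : ℕ) : ℤ) := by push_cast; ring
    have e2 : 2 * ((j + 1 : ℕ) : ℤ) + 3 = ((2 * j + 5 : ℕ) : ℤ) := by push_cast; ring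
    have e3 : 2 * ((j + 1 : ℕ) : ℤ) + 1 = ((2 * j + 3 : ℕ) : ℤ) := by push_cast; ring
    rw [e1, e2, e3, fibZ_natCast, fibZ_natCast, fibZ_natCast]
    have := fib_add_four (2 * j + 1)
    have e4 : 2 * j + 1 + 4 = 2 * j + 5 := by omega
    have e5 : 2 * j + 1 + 2 = 2 * j + 3 := by omega
    rw [e4, e5] at this
    exact_mod_cast this

lemma fibZ_odd_pos (n : ℕ) : 0 < fibZ (2 * (n : ℤ) - 1) := by
  cases n with
  | zero => decide
  | succ j =>
    have e1 : 2 * ((j + 1 : ℕ) : ℤ) - 1 = ((2 * j + 1 : ℕ) : ℤ) := by push_cast; ring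
    rw [e1, fibZ_natCast]
    exact_mod_cast Nat.fib_pos.mpr (by omega)

lemma fibZ_odd_pos' (n : ℕ) : 0 < fibZ (2 * (n : ℤ) + 1) := by
  have := fibZ_odd_pos (n + 1)
  have e1 : 2 * ((n + 1 : ℕ) : ℤ) - 1 = 2 * (n : ℤ) + 1 := by push_cast; ring
  rwa [e1] at this

lemma ps_ne_zero_of_constCoeff (f : PowerSeries ℚ)
    (h : PowerSeries.constantCoeff f ≠ 0) : f ≠ 0 := by
  intro hf
  exact h (by rw [hf]; simp)

/-- With `S` the power series with constant term 1 and `S² = (1-PowerSeries.X)(1-5X)`, `d_{-1} = 1`,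
`R_{-1} = (3(1-PowerSeries.X) - S)/(2(1-PowerSeries.X))`, `R_{2n+1} = d_{2n+1} + (1-3X-S)/(2X)` and
`R_{2n} = d_{2n}/(1 - PowerSeries.X R_{2n+1})`, one has `R_m (1 - PowerSeries.X R_{m+1}) = d_m` for all `m ≥ -1`. -/
theorem continued_fraction_remainders
(d : ℕ → ℚ) (hd0 : d 0 = 1)
    (hdodd : ∀ m : ℕ, 1 ≤ m →
      d (2 * m - 1) = (fibZ (2 * (m : ℤ) - 1) : ℚ) / (fibZ (2 * (m : ℤ) - 3) : ℚ))
    (hdeven : ∀ m : ℕ, 1 ≤ m →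
      d (2 * m) = (fibZ (2 * (m : ℤ) - 3) : ℚ) / (fibZ (2 * (m : ℤ) - 1) : ℚ))
    (S : PowerSeries ℚ)
    (hS : S ^ 2 = (1 - PowerSeries.X) * (1 - 5 * PowerSeries.X))
    (hS0 : PowerSeries.constantCoeff S = 1)
    (R : ℤ → PowerSeries ℚ)
    (hRneg : R (-1) * (2 * (1 - PowerSeries.X)) = 3 * (1 - PowerSeries.X) - S)
    (hRodd : ∀ n : ℕ, R (2 * (n : ℤ) + 1) * (2 * PowerSeries.X) =
      PowerSeries.C (d (2 * n + 1)) * (2 * PowerSeries.X) + (1 - 3 * PowerSeries.X - S))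
    (hReven : ∀ n : ℕ, R (2 * (n : ℤ)) * (1 - PowerSeries.X * R (2 * (n : ℤ) + 1)) =
      PowerSeries.C (d (2 * n)))
    (m : ℤ) (hm : -1 ≤ m) :
    R m * (1 - PowerSeries.X * R (m + 1)) =
      PowerSeries.C (if m = -1 then 1 else d m.toNat) := by
  rcases eq_or_lt_of_le hm with h | h
  · -- m = -1
    have hmeq : m = -1 := h.symm
    subst hmeq
    rw [if_pos rfl, map_one]
    have hd1 : d 1 = 1 := by
      have h1 := hdodd 1 (le_refl 1)
      norm_num at h1
      have e1 : fibZ 1 = 1 := by decide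
      have e2 : fibZ (-1) = 1 := by decide
      rw [e1, e2] at h1
      norm_num at h1
      exact h1
    have hB1 := hRodd 0
    norm_num at hB1
    rw [hd1, map_one] at hB1
    have hC0 := hReven 0
    norm_num at hC0
    rw [hd0, map_one] at hC0
    have hgoal : (-1 : ℤ) + 1 = 0 := by norm_num
    rw [hgoal]
    have hne : (4 : PowerSeries ℚ) * (1 - PowerSeries.X) * (1 - PowerSeries.X * R 1) ≠ 0 := by
      apply mul_ne_zero
      apply mul_ne_zero
      · apply ps_ne_zero_of_constCoeff; simp [PowerSeries.constantCoeff_X, map_ofNat]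
      · apply ps_ne_zero_of_constCoeff; simp [PowerSeries.constantCoeff_X, map_ofNat]
      · apply ps_ne_zero_of_constCoeff; simp [PowerSeries.constantCoeff_X, map_ofNat]
    apply mul_right_cancel₀ hne
    linear_combination (1 - PowerSeries.X + S) * hRneg + (2 * (1 - PowerSeries.X) - 2 * (1 - PowerSeries.X) * R (-1)) * hB1
      + (-4 * (1 - PowerSeries.X) * PowerSeries.X * R (-1)) * hC0 + (-1) * hS
  · -- m ≥ 0
    have hm0 : 0 ≤ m := by omega
    lift m to ℕ using hm0 with k
    rw [if_neg (by omega), Int.toNat_natCast]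
    rcases Nat.even_or_odd k with ⟨n, hn⟩ | ⟨n, hn⟩
    · -- even: k = 2n
      subst hn
      have e1 : ((n + n : ℕ) : ℤ) = 2 * (n : ℤ) := by push_cast; ring
      have e2 : n + n = 2 * n := by omega
      rw [e1, e2]
      exact hReven n
    · -- odd: k = 2n+1
      subst hn
      have e1 : ((2 * n + 1 : ℕ) : ℤ) = 2 * (n : ℤ) + 1 := by push_cast; ring
      rw [e1]
      -- scalar facts
      set p := fibZ (2 * (n : ℤ) - 1) with hp
      set q := fibZ (2 * (n : ℤ) + 1) with hq
      set r := fibZ (2 * (n : ℤ) + 3) with hr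
      have hppos := fibZ_odd_pos n
      have hqpos := fibZ_odd_pos' n
      have hpne : ((p : ℚ)) ≠ 0 := by exact_mod_cast hppos.ne'
      have hqne : ((q : ℚ)) ≠ 0 := by exact_mod_cast hqpos.ne'
      have h3t : p + r = 3 * q := fibZ_three_term n
      have ha : d (2 * n + 1) = (q : ℚ) / (p : ℚ) := by
        have h1 := hdodd (n + 1) (by omega)
        have i1 : 2 * ((n + 1 : ℕ) : ℤ) - 1 = 2 * (n : ℤ) + 1 := by push_cast; ring
        have i2 : 2 * ((n + 1 : ℕ) : ℤ) - 3 = 2 * (n : ℤ) - 1 := by push_cast; ring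
        have i3 : 2 * (n + 1) - 1 = 2 * n + 1 := by omega
        rw [i1, i2, i3] at h1
        exact h1
      have hb : d (2 * n + 2) = (p : ℚ) / (q : ℚ) := by
        have h1 := hdeven (n + 1) (by omega)
        have i1 : 2 * ((n + 1 : ℕ) : ℤ) - 1 = 2 * (n : ℤ) + 1 := by push_cast; ring
        have i2 : 2 * ((n + 1 : ℕ) : ℤ) - 3 = 2 * (n : ℤ) - 1 := by push_cast; ring
        have i3 : 2 * (n + 1) = 2 * n + 2 := by omega
        rw [i1, i2, i3] at h1
        exact h1
      have hc : d (2 * n + 3) = (r : ℚ) / (q : ℚ) := by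
        have h1 := hdodd (n + 2) (by omega)
        have i1 : 2 * ((n + 2 : ℕ) : ℤ) - 1 = 2 * (n : ℤ) + 3 := by push_cast; ring
        have i2 : 2 * ((n + 2 : ℕ) : ℤ) - 3 = 2 * (n : ℤ) + 1 := by push_cast; ring
        have i3 : 2 * (n + 2) - 1 = 2 * n + 3 := by omega
        rw [i1, i2, i3] at h1
        exact h1
      have hab : d (2 * n + 1) * d (2 * n + 2) = 1 := by
        rw [ha, hb]; field_simp
      have hbc : d (2 * n + 2) + d (2 * n + 3) = 3 := by
        rw [hb, hc, ← add_div, div_eq_iff hqne]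
        have : ((p : ℚ)) + (r : ℚ) = 3 * (q : ℚ) := by exact_mod_cast h3t
        linarith [this]
      -- power series identities, mapped through C
      have hab' : PowerSeries.C (d (2 * n + 1)) * PowerSeries.C (d (2 * n + 2)) = 1 := by
        rw [← map_mul, hab, map_one]
      have hbc' : PowerSeries.C (d (2 * n + 2)) + PowerSeries.C (d (2 * n + 3)) = 3 := by
        rw [← map_add, hbc, map_ofNat]
      have hB1 := hRodd n
      have hB2 : R (2 * (n : ℤ) + 3) * (2 * PowerSeries.X) =
          PowerSeries.C (d (2 * n + 3)) * (2 * PowerSeries.X) + (1 - 3 * PowerSeries.X - S) := by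
        have h1 := hRodd (n + 1)
        have i1 : 2 * ((n + 1 : ℕ) : ℤ) + 1 = 2 * (n : ℤ) + 3 := by push_cast; ring
        have i2 : 2 * (n + 1) + 1 = 2 * n + 3 := by omega
        rw [i1, i2] at h1
        exact h1
      have hC2 : R (2 * (n : ℤ) + 2) * (1 - PowerSeries.X * R (2 * (n : ℤ) + 3)) =
          PowerSeries.C (d (2 * n + 2)) := by
        have h1 := hReven (n + 1)
        have i1 : ((2 : ℤ)) * ((n + 1 : ℕ) : ℤ) = 2 * (n : ℤ) + 2 := by push_cast; ring
        have i2 : 2 * ((n + 1 : ℕ) : ℤ) + 1 = 2 * (n : ℤ) + 3 := by push_cast; ring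
        have i3 : 2 * (n + 1) = 2 * n + 2 := by omega
        rw [i2, i1, i3] at h1
        exact h1
      have hne : (4 : PowerSeries ℚ) * PowerSeries.X * (1 - PowerSeries.X * R (2 * (n : ℤ) + 3)) ≠ 0 := by
        apply mul_ne_zero
        apply mul_ne_zero
        · apply ps_ne_zero_of_constCoeff; simp [PowerSeries.constantCoeff_X, map_ofNat]
        · exact PowerSeries.X_ne_zero
        · apply ps_ne_zero_of_constCoeff; simp [PowerSeries.constantCoeff_X, map_ofNat]
      have i4 : (2 * (n : ℤ) + 1) + 1 = 2 * (n : ℤ) + 2 := by ring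
      rw [i4]
      apply mul_right_cancel₀ hne
      linear_combination (-4 * PowerSeries.X ^ 2 * R (2 * (n : ℤ) + 1)) * hC2
        + (2 - 2 * PowerSeries.X * PowerSeries.C (d (2 * n + 2)) - 2 * PowerSeries.X * R (2 * (n : ℤ) + 3)) * hB1
        + (-1 + 3 * PowerSeries.X + S) * hB2 + (-1) * hS
        + (2 * PowerSeries.X * S - 2 * PowerSeries.X + 6 * PowerSeries.X ^ 2) * hbc' + (-4 * PowerSeries.X ^ 2) * hab'
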